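/- arXiv:2310.18855 — 2 statements merged into one kernel-verified Lean document; each statement's English description precedes it below -/
import Mathlib

section
/- Let X = X(𝒢) be a coded shift such that 𝒢 uniquely represents X_seq. Then for every finite word w over the alphabet, the set [w]_seq := [w] ∩ X_seq is a countable union of shifted 𝒢-cylinders, i.e. of sets of the form σ^l⟦g_0⋯g_k⟧ with g_0,…,g_k ∈ 𝒢 and l ∈ ℤ. -/
open MeasureTheory Filter Set
open scoped ENNReal NNReal

noncomputable section

namespace Coded

variable {A : Type*}

/-- The left shift map on bi-infinite sequences. -/
def shift (x : ℤ → A) : ℤ → A := fun n => x (n + 1)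

/-- The shift by `m` steps, `σ^m`. -/
def shiftBy (m : ℤ) (x : ℤ → A) : ℤ → A := fun n => x (n + m)

/-- The word `x[a,b)` read off a bi-infinite sequence. -/
def extract (x : ℤ → A) (a b : ℤ) : List A :=
  (List.range (b - a).toNat).map fun j => x (a + (j : ℤ))

/-- `k` is a cut sequence presenting `x` as a bi-infinite concatenation of words of `G`. -/
def IsRepresentation (G : Set (List A)) (x : ℤ → A) (k : ℤ → ℤ) : Prop :=
  StrictMono k ∧ ∀ i : ℤ, extract x (k i) (k (i + 1)) ∈ G

/-- The sequential set `X_seq(G)`: all bi-infinite concatenations of words from `G`. -/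
def Xseq (G : Set (List A)) : Set (ℤ → A) :=
  {x | ∃ k : ℤ → ℤ, IsRepresentation G x k}

/-- `G` uniquely represents `X_seq(G)`: the cut sequence of any point of `X_seq(G)` is
unique up to enumeration, i.e. its range (the set of cut positions) is unique. -/
def UniquelyRepresents (G : Set (List A)) : Prop :=
  ∀ x : ℤ → A, ∀ k k' : ℤ → ℤ,
    IsRepresentation G x k → IsRepresentation G x k' → Set.range k = Set.range k'

/-- The cylinder set of a word `w` placed at position `0`. -/
def listCylinder (w : List A) : Set (ℤ → A) := {x | extract x 0 w.length = w}

/-- The word `w` occurs somewhere in `x`. -/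
def listOccursIn (w : List A) (x : ℤ → A) : Prop :=
  ∃ k : ℤ, extract x k (k + w.length) = w

/-- The words of length `n` occurring in points of `X`. -/
def langN (X : Set (ℤ → A)) (n : ℕ) : Set (List A) :=
  {w | w.length = n ∧ ∃ x ∈ X, listOccursIn w x}

/-- The language of `X`: all finite words occurring in points of `X`. -/
def langL (X : Set (ℤ → A)) : Set (List A) := {w | ∃ x ∈ X, listOccursIn w x}

/-- Exponential growth rate of the language of `X`; for a shift space `X` this is the
topological entropy `h_top(X)`. -/
def hSet (X : Set (ℤ → A)) : ℝ :=
  Filter.limsup (fun n : ℕ => Real.log ((langN X n).ncard) / (n : ℝ)) Filter.atTop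

/-- The entropy `h(G)` of a generating set `G`. -/
def hGen (G : Set (List A)) : ℝ :=
  Filter.limsup (fun n : ℕ => Real.log (({g ∈ G | g.length = n}).ncard) / (n : ℝ))
    Filter.atTop

section TopologySection
variable [TopologicalSpace A]

/-- The coded shift `X(G)`: the smallest shift space containing `X_seq(G)`,
i.e. the closure of the sequential set. -/
def codedShift (G : Set (List A)) : Set (ℤ → A) := closure (Xseq G)

/-- The residual set `X_res(G) = X(G) \ X_seq(G)`. -/
def Xres (G : Set (List A)) : Set (ℤ → A) := codedShift G \ Xseq G

/-- The limit set `X_lim(G)`: points all of whose central words are subwords of generators. -/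
def Xlim (G : Set (List A)) : Set (ℤ → A) :=
  {x | ∀ k : ℕ, ∃ g ∈ G, (extract x (-(k : ℤ)) ((k : ℤ) + 1)) <:+: g}

/-- A subshift: a closed shift-invariant subset of the full shift. -/
def IsSubshift (Z : Set (ℤ → A)) : Prop := IsClosed Z ∧ shift '' Z = Z

end TopologySection

section MeasureSection
variable [MeasurableSpace A]

/-- A shift-invariant Borel probability measure. -/
def InvProb (μ : Measure (ℤ → A)) : Prop :=
  IsProbabilityMeasure μ ∧ ∀ s : Set (ℤ → A), MeasurableSet s → μ (shift ⁻¹' s) = μ s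

/-- `μ ∈ M_σ(X)`: a shift-invariant Borel probability measure giving `X` full measure. -/
def MemM (X : Set (ℤ → A)) (μ : Measure (ℤ → A)) : Prop := InvProb μ ∧ μ X = 1

/-- The measure-theoretic (Kolmogorov–Sinai) entropy of a shift-invariant
probability measure, computed via cylinder sets. -/
def measEntropy (μ : Measure (ℤ → A)) : ℝ :=
  Filter.limsup
    (fun n : ℕ =>
      (∑' w : {l : List A // l.length = n},
          Real.negMulLog (μ (listCylinder (w : List A))).toReal) / (n : ℝ))
    Filter.atTop

/-- A measure of maximal entropy of `X`. -/
def IsMME (X : Set (ℤ → A)) (μ : Measure (ℤ → A)) : Prop :=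
  MemM X μ ∧ measEntropy μ = hSet X

variable [TopologicalSpace A]

/-- The sequential entropy `h_seq(X(G))`. -/
def hseq (G : Set (List A)) : ℝ :=
  sSup {h : ℝ | ∃ μ : Measure (ℤ → A),
    MemM (codedShift G) μ ∧ μ (Xseq G) = 1 ∧ measEntropy μ = h}

/-- The residual entropy `h_res(X(G))`. -/
def hres (G : Set (List A)) : ℝ :=
  sSup {h : ℝ | ∃ μ : Measure (ℤ → A),
    MemM (codedShift G) μ ∧ μ (Xres G) = 1 ∧ measEntropy μ = h}

end MeasureSection

/-- The `G`-cylinder `⟦g₀ ⋯ g_k⟧`: points of `X_seq(G)` whose representation has a cut at `0`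
followed by the generators `g₀, …, g_k`. -/
def Gcylinder (G : Set (List A)) (gs : List (List A)) : Set (ℤ → A) :=
  {x | ∃ k : ℤ → ℤ, IsRepresentation G x k ∧ k 0 = 0 ∧
      ∀ j : Fin gs.length, extract x (k ((j : ℕ) : ℤ)) (k (((j : ℕ) : ℤ) + 1)) = gs.get j}

/-- `E = ⋃_{g ∈ G} ⟦g⟧`. -/
def Eset (G : Set (List A)) : Set (ℤ → A) := ⋃ g ∈ G, Gcylinder G [g]

/-- The first return time to `E`. -/
def returnTime (E : Set (ℤ → A)) (x : ℤ → A) : ℕ := sInf {n : ℕ | 1 ≤ n ∧ shift^[n] x ∈ E}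

/-- The induced (first-return) map `σ_E`. -/
def inducedMap (E : Set (ℤ → A)) (x : ℤ → A) : ℤ → A := shift^[returnTime E x] x

section GBernoulli
variable [MeasurableSpace A]

/-- `μ` is `G`-Bernoulli with weights `p` and normalizing constant `c`. -/
def IsGBernoulliWith (G : Set (List A)) (μ : Measure (ℤ → A)) (p : List A → ℝ) (c : ℝ) :
    Prop :=
  (∀ g ∈ G, 0 < p g) ∧
  (∑' g : G, p (g : List A)) = 1 ∧
  Summable (fun g : G => ((g : List A).length : ℝ) * p (g : List A)) ∧
  (∑' g : G, ((g : List A).length : ℝ) * p (g : List A)) = c ∧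
  ∀ gs : List (List A), gs ≠ [] → (∀ g ∈ gs, g ∈ G) →
    (μ (Gcylinder G gs)).toReal = (1 / c) * (gs.map p).prod

/-- `μ` is `G`-Bernoulli. -/
def IsGBernoulli (G : Set (List A)) (μ : Measure (ℤ → A)) : Prop :=
  ∃ p c, IsGBernoulliWith G μ p c

end GBernoulli

end Coded

namespace Coded

section Aux

variable {A : Type*}

lemma extract_eq (x : ℤ → A) (a b : ℤ) :
    extract x a b = (List.range (b - a).toNat).map (fun j : ℕ => x (a + Nat.cast j)) := by
  rw [extract]
  have h : (Bind.bind (List.range (b - a).toNat) (fun a : ℕ => Pure.pure ((a : ℤ))) : List ℤ)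
      = (List.range (b - a).toNat).map Nat.cast := by
    simp only [List.bind_eq_flatMap]
    exact List.map_eq_flatMap.symm
  rw [h, List.map_map]
  rfl

lemma extract_length (x : ℤ → A) (a b : ℤ) : (extract x a b).length = (b - a).toNat := by
  rw [extract_eq, List.length_map, List.length_range]

lemma extract_congr {x x' : ℤ → A} {a b : ℤ} (h : ∀ n, a ≤ n → n < b → x n = x' n) :
    extract x a b = extract x' a b := by
  rw [extract_eq, extract_eq]
  apply List.map_congr_left
  intro j hj
  rw [List.mem_range] at hj
  exact h _ (by omega) (by omega)

lemma agree_of_extract_eq {x x' : ℤ → A} {a b : ℤ} (h : extract x a b = extract x' a b)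
    {n : ℤ} (h1 : a ≤ n) (h2 : n < b) : x n = x' n := by
  rw [extract_eq, extract_eq] at h
  have hj : (n - a).toNat < (b - a).toNat := by omega
  have h3 := congrArg (fun t : List A => t[(n - a).toNat]?) h
  simp only [List.getElem?_map, List.getElem?_range, hj, if_pos, Option.map_some] at h3
  have hn : a + (((n - a).toNat : ℕ) : ℤ) = n := by omega
  rw [hn] at h3
  exact Option.some.inj h3

lemma extract_append {x : ℤ → A} {a b c : ℤ} (hab : a ≤ b) (hbc : b ≤ c) :
    extract x a c = extract x a b ++ extract x b c := by
  rw [extract_eq, extract_eq, extract_eq]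
  have h1 : (c - a).toNat = (b - a).toNat + (c - b).toNat := by omega
  rw [h1, List.range_add, List.map_append, List.map_map]
  congr 1
  apply List.map_congr_left
  intro j hj
  rw [List.mem_range] at hj
  simp only [Function.comp]
  congr 1
  push_cast
  omega

lemma extract_shiftBy (m : ℤ) (x : ℤ → A) (a b : ℤ) :
    extract (shiftBy m x) a b = extract x (a + m) (b + m) := by
  rw [extract_eq, extract_eq]
  have h : b + m - (a + m) = b - a := by ring
  rw [h]
  apply List.map_congr_left
  intro j _
  show x (a + (j : ℤ) + m) = x (a + m + (j : ℤ))
  congr 1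
  ring

lemma shiftBy_mem_Xseq {G : Set (List A)} (m : ℤ) {x : ℤ → A} (hx : x ∈ Xseq G) :
    shiftBy m x ∈ Xseq G := by
  obtain ⟨k, hk, hkG⟩ := hx
  refine ⟨fun i => k i - m, ?_, fun i => ?_⟩
  · intro i j hij
    dsimp only
    have := hk hij
    omega
  rw [extract_shiftBy]
  simpa using hkG i

lemma strictMono_upper {k : ℤ → ℤ} (hk : StrictMono k) (i : ℤ) :
    ∀ n : ℕ, k i + n ≤ k (i + n) := by
  intro n
  induction n with
  | zero => simp
  | succ n ih =>
    have h1 : k (i + n) < k (i + (n + 1 : ℕ)) := by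
      apply hk; push_cast; omega
    push_cast
    push_cast at ih h1
    omega

lemma strictMono_lower {k : ℤ → ℤ} (hk : StrictMono k) (i : ℤ) :
    ∀ n : ℕ, k (i - n) ≤ k i - n := by
  intro n
  induction n with
  | zero => simp
  | succ n ih =>
    have h1 : k (i - (n + 1 : ℕ)) < k (i - n) := by
      apply hk; push_cast; omega
    push_cast
    push_cast at ih h1
    omega

lemma cyl_join {gs : List (List A)} {y : ℤ → A} {k : ℤ → ℤ}
    (hmono : StrictMono k) (h0 : k 0 = 0)
    (hgs : ∀ j : Fin gs.length, extract y (k ((j : ℕ) : ℤ)) (k (((j : ℕ) : ℤ) + 1)) = gs.get j) :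
    ∀ m, m ≤ gs.length →
      k (m : ℤ) = (((gs.take m).flatten.length : ℕ) : ℤ) ∧
        extract y 0 (k (m : ℤ)) = (gs.take m).flatten := by
  intro m
  induction m with
  | zero =>
    intro _
    refine ⟨by simpa using h0, ?_⟩
    simp only [Nat.cast_zero, h0]
    rw [extract_eq]
    simp
  | succ m ih =>
    intro hm
    obtain ⟨hk, he⟩ := ih (le_of_lt (Nat.lt_of_succ_le hm))
    have hmlt : m < gs.length := hm
    have hg := hgs ⟨m, hmlt⟩
    simp only [Fin.val_mk, List.get_eq_getElem] at hg
    have hlen2 : (extract y (k (m : ℤ)) (k ((m : ℤ) + 1))).length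
        = (k ((m : ℤ) + 1) - k (m : ℤ)).toNat := extract_length _ _ _
    have hkm : k (m : ℤ) < k ((m : ℤ) + 1) := hmono (by omega)
    rw [hg] at hlen2
    have hk1 : k ((m : ℤ) + 1) = k (m : ℤ) + (gs[m].length : ℤ) := by omega
    have htake : (gs.take (m + 1)).flatten = (gs.take m).flatten ++ gs[m] := by
      have h5 : gs.take (m + 1) = gs.take m ++ [gs[m]] := by
        rw [List.take_succ, List.getElem?_eq_getElem hmlt]
        rfl
      rw [h5, List.flatten_append]
      simp
    have hcast : ((m + 1 : ℕ) : ℤ) = (m : ℤ) + 1 := by push_cast; ring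
    constructor
    · rw [hcast, hk1, htake, hk]
      simp
    · rw [hcast]
      have h0le : (0 : ℤ) ≤ k (m : ℤ) := by omega
      rw [extract_append h0le (le_of_lt hkm), he, hg, htake]

lemma Gcylinder_extract {G : Set (List A)} {gs : List (List A)} {y : ℤ → A}
    (hy : y ∈ Gcylinder G gs) :
    extract y 0 ((gs.flatten.length : ℕ) : ℤ) = gs.flatten := by
  obtain ⟨k, ⟨hmono, _⟩, h0, hgs⟩ := hy
  obtain ⟨hk, he⟩ := cyl_join hmono h0 hgs gs.length le_rfl
  rw [List.take_length] at hk he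
  rw [← hk]
  exact he

lemma Gcylinder_mem_Xseq {G : Set (List A)} {gs : List (List A)} {y : ℤ → A}
    (hy : y ∈ Gcylinder G gs) : y ∈ Xseq G := by
  obtain ⟨k, hrep, _, _⟩ := hy
  exact ⟨k, hrep⟩

end Aux

/-- **Lemma.** If `G` uniquely represents `X_seq`, then for every finite word `w` the set
`[w]_seq = [w] ∩ X_seq` is a countable union of shifted `G`-cylinders
`σ^l ⟦g₀ ⋯ g_k⟧` with `g₀, …, g_k ∈ G` and `l ∈ ℤ`. -/
theorem wcylinder_seq_union {A : Type*} [Fintype A]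
    (G : Set (List A)) (hu : UniquelyRepresents G) (w : List A) :
    ∃ S : Set (List (List A) × ℤ), S.Countable ∧
      (∀ p ∈ S, p.1 ≠ [] ∧ ∀ g ∈ p.1, g ∈ G) ∧
      listCylinder w ∩ Xseq G = ⋃ p ∈ S, shiftBy p.2 '' Gcylinder G p.1 := by
  classical
  refine ⟨{p : List (List A) × ℤ | p.1 ≠ [] ∧ (∀ g ∈ p.1, g ∈ G) ∧
      shiftBy p.2 '' Gcylinder G p.1 ⊆ listCylinder w ∩ Xseq G}, ?_, ?_, ?_⟩
  · exact Set.to_countable _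
  · intro p hp
    exact ⟨hp.1, hp.2.1⟩
  · apply Set.Subset.antisymm
    · -- hard direction
      rintro x ⟨hxw, hxseq⟩
      obtain ⟨k, hmono, hkG⟩ := hxseq
      -- find a cut at or before 0 and a cut at or after |w|
      set a : ℤ := 0 - ((k 0).toNat : ℤ) with ha
      have hka : k a ≤ 0 := by
        have := strictMono_lower hmono 0 (k 0).toNat
        rw [← ha] at this
        omega
      set nb : ℕ := ((w.length : ℤ) - k a).toNat + 1 with hnb
      set b : ℤ := a + nb with hb
      have hab : a < b := by
        rw [hb]; omega
      have hkb : (w.length : ℤ) ≤ k b := by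
        have := strictMono_upper hmono a nb
        rw [← hb] at this
        have h2 : ((w.length : ℤ) - k a) ≤ ((((w.length : ℤ) - k a).toNat : ℕ) : ℤ) := by omega
        omega
      -- the list of generators covering [k a, k b)
      set gs : List (List A) :=
        (List.range (b - a).toNat).map
          (fun j : ℕ => extract x (k (a + Nat.cast j)) (k (a + Nat.cast j + 1))) with hgs
      have hgslen : gs.length = (b - a).toNat := by simp [hgs]
      have hgsget : ∀ (m : ℕ) (hm : m < gs.length),
          gs[m]'hm = extract x (k (a + m)) (k (a + m + 1)) := by
        intro m hm
        simp only [hgs, List.getElem_map, List.getElem_range]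
      set l : ℤ := -(k a) with hl
      -- the shifted point lies in the G-cylinder of gs
      have hmono' : StrictMono (fun i : ℤ => k (i + a) - k a) := by
        intro i j hij
        simp only
        have h := hmono (show i + a < j + a by omega)
        omega
      have hext : ∀ (x' : ℤ → A) (i : ℤ),
          extract (shiftBy (k a) x') (k (i + a) - k a) (k (i + 1 + a) - k a)
            = extract x' (k (i + a)) (k (i + 1 + a)) := by
        intro x' i
        rw [extract_shiftBy]
        congr 1 <;> ring
      have hrepG : ∀ i : ℤ,
          extract (shiftBy (k a) x) (k (i + a) - k a) (k (i + 1 + a) - k a) ∈ G := by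
        intro i
        rw [hext x i]
        have h3 : i + 1 + a = (i + a) + 1 := by ring
        rw [h3]
        exact hkG (i + a)
      have hgs' : ∀ j : Fin gs.length,
          extract (shiftBy (k a) x) (k (((j : ℕ) : ℤ) + a) - k a)
              (k (((j : ℕ) : ℤ) + 1 + a) - k a) = gs.get j := by
        intro j
        rw [hext x ((j : ℕ) : ℤ)]
        have hjl : (j : ℕ) < gs.length := j.isLt
        rw [List.get_eq_getElem, hgsget (j : ℕ) hjl]
        congr 2 <;> ring
      have hycyl : shiftBy (k a) x ∈ Gcylinder G gs :=
        ⟨fun i => k (i + a) - k a, ⟨hmono', fun i => hrepG i⟩, by simp, fun j => hgs' j⟩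
      -- x = shiftBy l (shiftBy (k a) x)
      have hxy : x = shiftBy l (shiftBy (k a) x) := by
        funext n
        simp only [shiftBy, hl]
        congr 1
        ring
      -- total length of gs
      have hjoinlen : ((gs.flatten.length : ℕ) : ℤ) = k b - k a := by
        obtain ⟨hk2, -⟩ := cyl_join hmono' (by simp) hgs' gs.length le_rfl
        rw [List.take_length] at hk2
        rw [← hk2, hgslen]
        have h6 : (((b - a).toNat : ℕ) : ℤ) + a = b := by omega
        rw [h6]
      -- the pair (gs, l) belongs to S
      have hgsne : gs ≠ [] := by
        intro h
        have h7 := hgslen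
        rw [h] at h7
        simp at h7
        omega
      have hgsG : ∀ g ∈ gs, g ∈ G := by
        intro g hg
        rw [hgs] at hg
        simp only [List.mem_map, List.mem_range] at hg
        obtain ⟨j, -, rfl⟩ := hg
        exact hkG (a + j)
      have hsub : shiftBy l '' Gcylinder G gs ⊆ listCylinder w ∩ Xseq G := by
        rintro _ ⟨y', hy', rfl⟩
        constructor
        · -- listCylinder w
          show extract (shiftBy l y') 0 (w.length : ℤ) = w
          rw [extract_shiftBy]
          have hzl : (0 : ℤ) + l = l := by ring
          rw [hzl]
          -- y' and shiftBy (k a) x agree on [0, flatten length)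
          have hagree : extract y' 0 ((gs.flatten.length : ℕ) : ℤ)
              = extract (shiftBy (k a) x) 0 ((gs.flatten.length : ℕ) : ℤ) := by
            rw [Gcylinder_extract hy', Gcylinder_extract hycyl]
          have hly : extract y' l ((w.length : ℤ) + l)
              = extract (shiftBy (k a) x) l ((w.length : ℤ) + l) := by
            apply extract_congr
            intro n hn1 hn2
            apply agree_of_extract_eq hagree
            · omega
            · rw [hjoinlen]; omega
          rw [hly, extract_shiftBy]
          have h1 : l + k a = 0 := by rw [hl]; ring
          have h2 : (w.length : ℤ) + l + k a = (w.length : ℤ) := by rw [hl]; ring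
          rw [h1, h2]
          exact hxw
        · -- Xseq
          exact shiftBy_mem_Xseq l (Gcylinder_mem_Xseq hy')
      exact Set.mem_iUnion₂.mpr ⟨(gs, l), ⟨hgsne, hgsG, hsub⟩, ⟨shiftBy (k a) x, hycyl, hxy.symm⟩⟩
    · -- easy direction
      intro x hx
      rw [Set.mem_iUnion₂] at hx
      obtain ⟨p, hp, hxp⟩ := hx
      exact hp.2.2 hxp

end Coded
end
end

section
/- Let X be a shift space over a finite alphabet and let Y ⊂ X be a shift-invariant (not necessarily closed) set. Then every shift-invariant Borel probability measure μ on X with μ(Y) = 1 satisfies h_σ(μ) ≤ h(Y), where h(Y) = limsup_{n→∞} (1/n) log |L_n(Y)| and L_n(Y) is the set of words of length n occurring in points of Y. -/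
open MeasureTheory Filter Set
open scoped ENNReal NNReal

noncomputable section

namespace Coded

variable {A : Type*}

lemma coe_list_int (l : List ℕ) : ((l : List ℕ) : List ℤ) = l.map Int.ofNat := by
  show l.flatMap (fun a => [Int.ofNat a]) = _
  induction l with
  | nil => rfl
  | cons a l ih => simp only [List.flatMap_cons, ih, List.map_cons]; rfl

lemma extract_length_natCast (x : ℤ → A) (n : ℕ) :
    (extract x 0 (n : ℤ)).length = n := by
  rw [extract_length]; simp

lemma extract_getElem (x : ℤ → A) (a b : ℤ) (i : ℕ) (h : i < (extract x a b).length) :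
    (extract x a b)[i] = x (a + i) := by
  simp only [extract, coe_list_int, List.getElem_map, List.getElem_range]
  rfl

lemma extract_zero_eq_ofFn (x : ℤ → A) (n : ℕ) :
    extract x 0 n = List.ofFn (fun j : Fin n => x ((j : ℕ) : ℤ)) := by
  apply List.ext_getElem
  · rw [extract_length_natCast, List.length_ofFn]
  · intro i h1 h2
    rw [extract_getElem, List.getElem_ofFn]
    norm_num

lemma mem_listCylinder_iff (w : List A) (x : ℤ → A) :
    x ∈ listCylinder w ↔ (fun j : Fin w.length => x ((j : ℕ) : ℤ)) = fun j => w.get j := by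
  have hw : w = List.ofFn (fun j : Fin w.length => w.get j) := (List.ofFn_get w).symm
  constructor
  · intro h
    rw [← List.ofFn_inj, ← extract_zero_eq_ofFn, ← hw]
    exact h
  · intro h
    show extract x 0 w.length = w
    rw [extract_zero_eq_ofFn, h, ← hw]

lemma measurableSet_listCylinder [MeasurableSpace A] [MeasurableSingletonClass A]
    (w : List A) : MeasurableSet (listCylinder w) := by
  have : listCylinder w = (fun x : ℤ → A => fun j : Fin w.length => x ((j : ℕ) : ℤ)) ⁻¹'
      {fun j : Fin w.length => w.get j} := by
    ext x
    simp only [Set.mem_preimage, Set.mem_singleton_iff]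
    exact mem_listCylinder_iff w x
  rw [this]
  exact (measurable_pi_lambda _ fun j => measurable_pi_apply _) (MeasurableSet.singleton _)

end Coded

namespace Coded

/-- **Lemma.** Let `X` be a shift space over a finite alphabet and let `Y ⊆ X` be a
shift-invariant (not necessarily closed) set. Then every shift-invariant Borel probability
measure `μ` on `X` with `μ(Y) = 1` satisfies `h_σ(μ) ≤ h(Y)`, where
`h(Y) = limsup_n (1/n) log |L_n(Y)|`. -/
theorem entropy_le_language_growth {A : Type*} [Fintype A] [TopologicalSpace A]
    [DiscreteTopology A] [MeasurableSpace A] [MeasurableSingletonClass A]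
    (X : Set (ℤ → A)) (hX : IsSubshift X)
    (Y : Set (ℤ → A)) (hYX : Y ⊆ X) (hinv : shift '' Y = Y)
    (μ : Measure (ℤ → A)) (hμ : MemM X μ) (hY : μ Y = 1) :
    measEntropy μ ≤ hSet Y := by
  classical
  obtain ⟨⟨hprob, _⟩, _⟩ := hμ
  haveI := hprob
  -- Y is nonempty
  have hYne : Y.Nonempty := by
    rcases Set.eq_empty_or_nonempty Y with h | h
    · rw [h] at hY; simp at hY
    · exact h
  obtain ⟨y0, hy0⟩ := hYne
  -- key pointwise inequality
  have key : ∀ n : ℕ, 1 ≤ n →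
      (∑' w : {l : List A // l.length = n},
          Real.negMulLog (μ (listCylinder (w : List A))).toReal) / (n : ℝ) ≤
        Real.log ((langN Y n).ncard) / (n : ℝ) := by
    intro n hn
    haveI hFin : Fintype {l : List A // l.length = n} := inferInstanceAs (Fintype (List.Vector A n))
    set p : {l : List A // l.length = n} → ℝ :=
      fun w => (μ (listCylinder (w : List A))).toReal with hp
    have hp0 : ∀ w, 0 ≤ p w := fun w => ENNReal.toReal_nonneg
    -- the map reading the word at position 0
    set f : (ℤ → A) → {l : List A // l.length = n} :=
      fun x => ⟨extract x 0 (n : ℤ), extract_length_natCast x n⟩ with hf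
    have hfiber : ∀ w : {l : List A // l.length = n},
        f ⁻¹' {w} = listCylinder (w : List A) := by
      intro w
      ext x
      simp only [Set.mem_preimage, Set.mem_singleton_iff, hf, Subtype.ext_iff]
      show extract x 0 (n : ℤ) = (w : List A) ↔ x ∈ listCylinder (w : List A)
      rw [show x ∈ listCylinder (w : List A) ↔
          extract x 0 ((w : List A).length : ℤ) = (w : List A) from Iff.rfl, w.2]
    -- total mass one
    have hsum1 : ∑ w : {l : List A // l.length = n}, μ (listCylinder (w : List A)) = 1 := by
      have := sum_measure_preimage_singleton (μ := μ)
        (Finset.univ : Finset {l : List A // l.length = n}) (f := f)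
        (fun w _ => by rw [hfiber]; exact measurableSet_listCylinder _)
      simp only [hfiber] at this
      simpa using this
    have hsum1' : ∑ w : {l : List A // l.length = n}, p w = 1 := by
      rw [hp, ← ENNReal.toReal_sum (fun w _ => measure_ne_top μ _), hsum1, ENNReal.toReal_one]
    -- cylinders outside the language have measure zero
    have hzero : ∀ w : {l : List A // l.length = n},
        (w : List A) ∉ langN Y n → p w = 0 := by
      intro w hw
      have hsub : Y ⊆ (listCylinder (w : List A))ᶜ := by
        intro x hx hxc
        refine hw ⟨w.2, x, hx, 0, ?_⟩
        have : extract x 0 ((w : List A).length : ℤ) = (w : List A) := hxc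
        simpa using this
      have hcm := measurableSet_listCylinder (A := A) (w : List A)
      have h1 : μ ((listCylinder (w : List A))ᶜ) = 1 := by
        refine le_antisymm prob_le_one ?_
        calc (1 : ℝ≥0∞) = μ Y := hY.symm
          _ ≤ _ := measure_mono hsub
      have hzero' : μ (listCylinder (w : List A)) = 0 := by
        have hc := measure_compl hcm.compl (measure_ne_top μ _)
        rw [compl_compl, h1, measure_univ, tsub_self] at hc
        exact hc
      rw [hp]
      simp [hzero']
    -- the language as a finset
    set F : Finset {l : List A // l.length = n} :=
      Finset.univ.filter (fun w => (w : List A) ∈ langN Y n) with hF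
    have hmemF : ∀ w, w ∈ F ↔ (w : List A) ∈ langN Y n := by
      intro w; simp [hF]
    -- langN Y n is the image of F
    have himage : langN Y n = ↑(F.image (Subtype.val)) := by
      ext l
      simp only [Finset.coe_image, Set.mem_image, Finset.mem_coe]
      constructor
      · intro hl
        exact ⟨⟨l, hl.1⟩, (hmemF _).mpr hl, rfl⟩
      · rintro ⟨w, hw, rfl⟩
        exact (hmemF _).mp hw
    have hcard : (langN Y n).ncard = F.card := by
      rw [himage, Set.ncard_coe_finset, Finset.card_image_of_injective _ Subtype.val_injective]
    -- F is nonempty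
    have hFne : F.Nonempty := by
      have hw : extract y0 0 (n : ℤ) ∈ langN Y n := by
        refine ⟨extract_length_natCast y0 n, y0, hy0, 0, ?_⟩
        rw [extract_length_natCast, zero_add]
      exact ⟨⟨extract y0 0 (n : ℤ), extract_length_natCast y0 n⟩, (hmemF _).mpr hw⟩
    set N : ℝ := (F.card : ℝ) with hN
    have hNpos : 0 < N := by
      rw [hN]
      exact_mod_cast Finset.card_pos.mpr hFne
    -- sums over F equal sums over univ
    have hsumF : ∑ w ∈ F, p w = 1 := by
      rw [← hsum1']
      exact Finset.sum_subset (Finset.subset_univ F)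
        (fun w _ hw => hzero w (fun hmem => hw ((hmemF w).mpr hmem)))
    have hsumFn : ∑ w ∈ F, Real.negMulLog (p w) =
        ∑ w : {l : List A // l.length = n}, Real.negMulLog (p w) :=
      Finset.sum_subset (Finset.subset_univ F)
        (fun w _ hw => by rw [hzero w (fun hmem => hw ((hmemF w).mpr hmem))]; simp)
    -- Jensen's inequality
    have hjensen := Real.concaveOn_negMulLog.le_map_sum (t := F)
      (w := fun _ => 1 / N) (p := p)
      (fun _ _ => div_nonneg zero_le_one hNpos.le)
      (by rw [Finset.sum_const, nsmul_eq_mul]; field_simp; exact hN.symm)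
      (fun w _ => hp0 w)
    simp only [smul_eq_mul] at hjensen
    rw [← Finset.mul_sum, ← Finset.mul_sum, hsumF, mul_one] at hjensen
    have hlog : Real.negMulLog (1 / N) = (1 / N) * Real.log N := by
      rw [Real.negMulLog, one_div, Real.log_inv]
      ring
    rw [hlog] at hjensen
    have hsum_le : ∑ w : {l : List A // l.length = n}, Real.negMulLog (p w) ≤ Real.log N := by
      rw [← hsumFn]
      exact (mul_le_mul_iff_right₀ (one_div_pos.mpr hNpos : (0:ℝ) < 1 / N)).mp hjensen
    have hnpos : (0:ℝ) < n := by
      have : 0 < n := hn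
      exact_mod_cast this
    rw [tsum_fintype]
    apply div_le_div_of_nonneg_right ?_ hnpos.le
    rw [hcard]
    exact hsum_le
  -- the entropy terms are nonnegative
  have hu0 : ∀ n : ℕ, 0 ≤ (∑' w : {l : List A // l.length = n},
      Real.negMulLog (μ (listCylinder (w : List A))).toReal) / (n : ℝ) := by
    intro n
    apply div_nonneg _ (Nat.cast_nonneg n)
    apply tsum_nonneg
    intro w
    apply Real.negMulLog_nonneg ENNReal.toReal_nonneg
    have : (μ (listCylinder (w : List A))).toReal ≤ (1 : ℝ≥0∞).toReal :=
      ENNReal.toReal_mono ENNReal.one_ne_top prob_le_one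
    simpa using this
  -- the language growth terms are bounded above
  have hvb : ∀ᶠ n : ℕ in atTop,
      Real.log ((langN Y n).ncard) / (n : ℝ) ≤ Real.log ((Fintype.card A : ℝ) + 1) := by
    filter_upwards [eventually_ge_atTop 1] with n hn
    have hnpos : (0:ℝ) < n := by
      have : 0 < n := hn
      exact_mod_cast this
    have hcard_le : (langN Y n).ncard ≤ (Fintype.card A + 1) ^ n := by
      haveI hFin : Fintype {l : List A // l.length = n} := inferInstanceAs (Fintype (List.Vector A n))
      haveI : Finite {l : List A // l.length = n} := Finite.of_fintype _
      have h1 : langN Y n ⊆ {l : List A | l.length = n} := fun w hw => hw.1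
      have hfin : {l : List A | l.length = n}.Finite := by
        have : Finite ↥{l : List A | l.length = n} :=
          (Finite.of_fintype ({l : List A // l.length = n}))
        exact Set.toFinite _
      have h2 : Nat.card {l : List A // l.length = n} = Fintype.card A ^ n :=
        calc Nat.card {l : List A // l.length = n}
            = Nat.card (List.Vector A n) := rfl
          _ = Fintype.card (List.Vector A n) := Nat.card_eq_fintype_card
          _ = Fintype.card A ^ n := card_vector n
      calc (langN Y n).ncard ≤ ({l : List A | l.length = n}).ncard :=
            Set.ncard_le_ncard h1 hfin
        _ = Nat.card {l : List A // l.length = n} := (Nat.card_coe_set_eq _).symm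
        _ = Fintype.card A ^ n := h2
        _ ≤ (Fintype.card A + 1) ^ n := Nat.pow_le_pow_left (Nat.le_succ _) n
    have hb1 : (1:ℝ) ≤ (Fintype.card A : ℝ) + 1 := by
      have : (0:ℝ) ≤ (Fintype.card A : ℝ) := Nat.cast_nonneg _
      linarith
    rcases Nat.eq_zero_or_pos ((langN Y n).ncard) with h0 | hpos
    · rw [h0]
      simp only [Nat.cast_zero, Real.log_zero, zero_div]
      exact Real.log_nonneg hb1
    · have hle : ((langN Y n).ncard : ℝ) ≤ ((Fintype.card A : ℝ) + 1) ^ n := by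
        have : (((Fintype.card A + 1) ^ n : ℕ) : ℝ) = ((Fintype.card A : ℝ) + 1) ^ n := by
          push_cast; ring
        rw [← this]
        exact_mod_cast hcard_le
      have hlog_le : Real.log ((langN Y n).ncard) ≤ (n : ℝ) * Real.log ((Fintype.card A : ℝ) + 1) := by
        rw [← Real.log_pow]
        exact Real.log_le_log (by exact_mod_cast hpos) hle
      calc Real.log ((langN Y n).ncard) / (n : ℝ)
          ≤ ((n : ℝ) * Real.log ((Fintype.card A : ℝ) + 1)) / (n : ℝ) :=
            div_le_div_of_nonneg_right hlog_le hnpos.le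
        _ = Real.log ((Fintype.card A : ℝ) + 1) := mul_div_cancel_left₀ _ hnpos.ne'
  show Filter.limsup _ Filter.atTop ≤ Filter.limsup _ Filter.atTop
  apply Filter.limsup_le_limsup
  · filter_upwards [eventually_ge_atTop 1] with n hn using key n hn
  · exact Filter.isCoboundedUnder_le_of_le atTop hu0
  · exact ⟨Real.log ((Fintype.card A : ℝ) + 1), Filter.eventually_map.mpr hvb⟩


end Coded
end
end
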